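/- Let φ: X → P^{n−1} be a surjective proper morphism from a normal projective variety over an algebraically closed field, such that every fiber over a codimension-1 point of P^{n−1} is irreducible outside a codimension-2 subset, and suppose the irreducible components γ_i of the non-smooth locus of φ in codimension 1 are hypersurfaces of degrees a_i. Then the kernel of the restriction map Cl(X) → Pic(C_η), where C_η is the generic fiber, contains the subgroup generated by φ^* O_{P^{n−1}}(a) with a = gcd{a_i}, and every divisor class supported on fibers of φ lies in this subgroup. -/

import Mathlib

lemma gcd_mem_aux {P : Type} (f : P → ℤ) (A : AddSubgroup ℤ) (s : Finset P)
    (h : ∀ p ∈ s, f p ∈ A) : s.gcd f ∈ A := by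
  classical
  induction s using Finset.induction_on with
  | empty => simpa using A.zero_mem
  | insert a s hq ih =>
    rw [Finset.gcd_insert]
    have hx : f a ∈ A := h a (Finset.mem_insert_self a s)
    have hy : s.gcd f ∈ A := ih fun p hp => h p (Finset.mem_insert_of_mem hp)
    have hb := Int.gcd_eq_gcd_ab (f a) (s.gcd f)
    have : GCDMonoid.gcd (f a) (s.gcd f) =
        Int.gcdA (f a) (s.gcd f) • f a + Int.gcdB (f a) (s.gcd f) • (s.gcd f) := by
      rw [zsmul_eq_mul, zsmul_eq_mul, mul_comm _ (f a), mul_comm _ (s.gcd f)]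
      rw [← Int.coe_gcd]; exact hb
    rw [this]
    exact A.add_mem (A.zsmul_mem hx _) (A.zsmul_mem hy _)


/-!
STATEMENT 12: Let `φ : X → ℙ^{n−1}` be a surjective proper morphism from a normal projective
variety over an algebraically closed field whose fibers over codimension-1 points are
irreducible (outside codimension 2), and suppose the codimension-1 components `γᵢ` of the
non-smooth locus of `φ` are (preimages of) hypersurfaces of degrees `aᵢ`.  Then the kernel
of the restriction map `Cl(X) → Pic(C_η)` (`C_η` the generic fiber) contains the subgroup
generated by `φ^* O(a)` with `a = gcd {aᵢ}`, and every divisor class supported on fibers of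
`φ` lies in this subgroup.

Model (divisors as finitely supported functions on prime divisors): `P` is the set of prime
divisors of `X`, `Prin` the principal divisors, so `Cl(X) = (P →₀ ℤ) ⧸ Prin`; `Vert` is the
(finite) set of "vertical" prime divisors, i.e. the irreducible preimages `φ⁻¹(γᵢ)` of the
hypersurfaces `γᵢ ⊆ ℙ^{n−1}`, with `deg p = aᵢ`; `H` is a divisor representing
`φ^* O_{ℙ^{n−1}}(1)`.  The hypothesis `hvert` records that, the fiber over `γᵢ` being
irreducible, `φ⁻¹(γᵢ) ∼ aᵢ · φ^*O(1)`.  A class "restricts to zero on the generic fiber"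
iff it lies in the subgroup generated by `Prin` and vertical prime divisors, and a divisor
is "supported on fibers" iff it is supported on `Vert`.  Conclusions:
(1) `a • H` is trivial on the generic fiber, so `⟨φ^*O(a)⟩ ⊆ ker(Cl(X) → Pic(C_η))`; and
(2) every class supported on fibers lies in `⟨[a • H]⟩ = AddSubgroup.zmultiples [a • H]`.
-/
theorem stmt_12 (P : Type) (Prin : AddSubgroup (P →₀ ℤ))
    (Vert : Finset P) (deg : P → ℕ) (hdeg : ∀ p ∈ Vert, 1 ≤ deg p)
    (H : P →₀ ℤ)
    (hvert : ∀ p ∈ Vert, Finsupp.single p 1 - (deg p : ℤ) • H ∈ Prin) :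
    (((Vert.gcd fun p => (deg p : ℤ)) : ℤ) • H ∈
      Prin ⊔ AddSubgroup.closure {D : P →₀ ℤ | ∃ p ∈ Vert, D = Finsupp.single p 1}) ∧
    (∀ D : P →₀ ℤ, (∀ p : P, p ∉ Vert → D p = 0) →
      (QuotientAddGroup.mk D : (P →₀ ℤ) ⧸ Prin) ∈
        AddSubgroup.zmultiples
          (QuotientAddGroup.mk (((Vert.gcd fun p => (deg p : ℤ)) : ℤ) • H) : (P →₀ ℤ) ⧸ Prin)) := by
  classical
  set g : ℤ := Vert.gcd fun p => (deg p : ℤ) with hg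
  set S : AddSubgroup (P →₀ ℤ) :=
    Prin ⊔ AddSubgroup.closure {D : P →₀ ℤ | ∃ p ∈ Vert, D = Finsupp.single p 1} with hS
  constructor
  · -- part 1
    have : g ∈ S.comap (zmultiplesHom (P →₀ ℤ) H) := by
      apply gcd_mem_aux
      intro p hp
      simp only [AddSubgroup.mem_comap, zmultiplesHom_apply]
      have h1 : Finsupp.single p 1 ∈ S := by
        refine AddSubgroup.mem_sup_right (AddSubgroup.subset_closure ?_)
        exact ⟨p, hp, rfl⟩
      have h2 : Finsupp.single p 1 - (deg p : ℤ) • H ∈ S :=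
        AddSubgroup.mem_sup_left (hvert p hp)
      have := S.sub_mem h1 h2
      simpa using this
    simpa [AddSubgroup.mem_comap] using this
  · -- part 2
    intro D hD
    have hsupp : D.support ⊆ Vert := by
      intro p hp
      by_contra hpv
      exact Finsupp.mem_support_iff.mp hp (hD p hpv)
    have hDsum : D = ∑ p ∈ Vert, (D p) • Finsupp.single p (1 : ℤ) := by
      rw [← Finset.sum_subset hsupp (by
        intro p _ hp
        simp [Finsupp.notMem_support_iff.mp hp])]
      simp only [Finsupp.smul_single, smul_eq_mul, mul_one]
      exact (Finsupp.sum_single D).symm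
    -- pass to quotient
    set π : (P →₀ ℤ) →+ (P →₀ ℤ) ⧸ Prin := QuotientAddGroup.mk' Prin with hπ
    have hmk : ∀ p ∈ Vert, π (Finsupp.single p 1) = π ((deg p : ℤ) • H) := by
      intro p hp
      exact (QuotientAddGroup.eq_iff_sub_mem).mpr (hvert p hp)
    obtain ⟨m, hm⟩ : g ∣ ∑ p ∈ Vert, D p * (deg p : ℤ) := by
      apply Finset.dvd_sum
      intro p hp
      exact Dvd.dvd.mul_left (Finset.gcd_dvd hp) _
    have key : π D = m • π (g • H) := by
      calc π D = ∑ p ∈ Vert, (D p) • π (Finsupp.single p (1 : ℤ)) := by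
            conv_lhs => rw [hDsum]
            rw [map_sum]
            exact Finset.sum_congr rfl fun p _ => map_zsmul π _ _
        _ = ∑ p ∈ Vert, (D p * (deg p : ℤ)) • π H := by
            refine Finset.sum_congr rfl fun p hp => ?_
            rw [hmk p hp, map_zsmul, smul_smul]
        _ = (∑ p ∈ Vert, D p * (deg p : ℤ)) • π H := (map_sum (zmultiplesHom _ (π H)) _ _).symm
        _ = m • π (g • H) := by
            rw [hm, map_zsmul, smul_smul, mul_comm]
    rw [show (QuotientAddGroup.mk D : (P →₀ ℤ) ⧸ Prin) = π D from rfl, key]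
    exact AddSubgroup.mem_zmultiples_iff.mpr ⟨m, rfl⟩
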